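/- Let Q be a finite quiver without cycles of length m, with starting set S and associated quiver Q', and let n' = span Path(Q') ⊆ n_Q. Suppose D ∈ Der(n') satisfies: (a) D is diagonal with respect to the basis Path(Q') (i.e. every path in Path(Q') is an eigenvector of D), and (b) D∘f = f∘D for every f ∈ Aut(Q') (acting linearly on n' via its action on Path(Q')). Then the linear extension D̄ of D to n_Q defined by D̄|_{span S} = 0 is a derivation of n_Q. -/

import Mathlib

open scoped Classical

noncomputable section

variable {V E : Type*}

/-- A (positive-length) path in the quiver `(V, E, s, t)`: a nonempty list of arrows
in which consecutive arrows are composable, i.e. `t αᵢ = s αᵢ₊₁`. -/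
def IsPath (s t : E → V) (l : List E) : Prop :=
  l ≠ [] ∧ l.Chain' (fun a b => t a = s b)

/-- The source of a (nonempty) list of arrows, as an `Option`. -/
def src? (s : E → V) (l : List E) : Option V := l.head?.map s

/-- The target of a (nonempty) list of arrows, as an `Option`. -/
def tgt? (t : E → V) (l : List E) : Option V := l.getLast?.map t

/-- The quiver has no cycles: there is no path whose source equals its target. -/
def NoCycles (s t : E → V) : Prop :=
  ∀ l : List E, IsPath s t l → src? s l ≠ tgt? t l

/-- `m` is the maximum of the lengths of paths of the quiver (the length of the quiver). -/
def IsMaxPathLen (s t : E → V) (m : ℕ) : Prop :=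
  (∃ l : List E, IsPath s t l ∧ l.length = m) ∧ ∀ l : List E, IsPath s t l → l.length ≤ m

/-- The set `Path(Q)` of all paths of length `≥ 1`, as a subtype of lists of arrows. -/
abbrev PathQ (s t : E → V) := {l : List E // IsPath s t l}

/-- The underlying vector space of the Lie algebra `n_Q` obtained from the quiver:
the real vector space with basis `Path(Q)`. -/
abbrev nQ (s t : E → V) := PathQ s t →₀ ℝ

/-- The Lie bracket of two basis paths: `[x, y] = xy` if the concatenation `xy` is a path,
`[x, y] = -yx` if the concatenation `yx` is a path, and `[x, y] = 0` otherwise. -/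
def braBasis (s t : E → V) (x y : PathQ s t) : nQ s t :=
  if h : IsPath s t (x.val ++ y.val) then Finsupp.single ⟨x.val ++ y.val, h⟩ 1
  else if h' : IsPath s t (y.val ++ x.val) then -Finsupp.single ⟨y.val ++ x.val, h'⟩ 1
  else 0

/-- The Lie bracket of `n_Q`, extended bilinearly from basis paths. -/
def bra (s t : E → V) (u v : nQ s t) : nQ s t :=
  u.sum fun x cx => v.sum fun y cy => (cx * cy) • braBasis s t x y

/-- The span of all brackets of elements of two subspaces of `n_Q`. -/
def braSpan (s t : E → V) (M N : Submodule ℝ (nQ s t)) : Submodule ℝ (nQ s t) :=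
  Submodule.span ℝ {z | ∃ u ∈ M, ∃ v ∈ N, z = bra s t u v}

/-- The starting set `S` of a quiver of length `m`: the set of arrows `a` such that
`a x` is a path of length `m` for some path `x`. -/
def startSet (s t : E → V) (m : ℕ) : Set E :=
  {a | ∃ x : List E, IsPath s t x ∧ IsPath s t (a :: x) ∧ (a :: x).length = m}

/-- The arrow set `E' = (E ∖ S) ∪ {ab ∈ Path(Q) : a ∈ S, b ∈ E}` of the quiver `Q'`,
realized as a set of lists of arrows of `Q`. -/
def edgesQ' (s t : E → V) (m : ℕ) : Set (List E) :=
  {l | (∃ a : E, a ∉ startSet s t m ∧ l = [a]) ∨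
       (∃ a b : E, a ∈ startSet s t m ∧ IsPath s t [a, b] ∧ l = [a, b])}

/-- `L` is a decomposition of the list `l` of arrows as a path of the quiver `Q'`:
a nonempty chain of consecutively composable `Q'`-arrows whose concatenation is `l`. -/
def IsDecompQ' (s t : E → V) (m : ℕ) (L : List (List E)) (l : List E) : Prop :=
  L ≠ [] ∧ (∀ p ∈ L, p ∈ edgesQ' s t m) ∧
    L.Chain' (fun p q => tgt? t p = src? s q) ∧ L.flatten = l

/-- `l` underlies a path of the quiver `Q'`. -/
def IsPathQ' (s t : E → V) (m : ℕ) (l : List E) : Prop :=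
  ∃ L : List (List E), IsDecompQ' s t m L l

/-- `f : E → E` is an automorphism of the quiver `(V, E, s, t)`. -/
def IsQuivAut (s t : E → V) (f : E → E) : Prop :=
  Function.Bijective f ∧ ∀ x y : E, (t x = s y ↔ t (f x) = s (f y))

/-- `g` is an automorphism of the quiver whose arrow set is the set `ES` of lists of
arrows of `Q` (such as the quiver `Q'` with arrow set `edgesQ'`). -/
def IsQuivAutOn (s t : E → V) (ES : Set (List E)) (g : List E → List E) : Prop :=
  Set.BijOn g ES ES ∧
    ∀ p ∈ ES, ∀ q ∈ ES, (tgt? t p = src? s q ↔ tgt? t (g p) = src? s (g q))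

/-- The subspace `n' = span Path(Q')` of `n_Q`. -/
def nQ'span (s t : E → V) (m : ℕ) : Submodule ℝ (nQ s t) :=
  Submodule.span ℝ {u | ∃ p : PathQ s t, IsPathQ' s t m p.val ∧ u = Finsupp.single p 1}

/-- A single arrow, regarded as a path of length one. -/
def edgePath (s t : E → V) (a : E) : PathQ s t := ⟨[a], by simp [IsPath]; exact List.isChain_singleton _⟩

/-- The linear map `T` on `n_Q` realizes the action of `g ∈ Aut(Q')` on `Path(Q')`:
if the path `p` of `Q'` is mapped to the path `q` by applying `g` piecewise to a
decomposition of `p` into `Q'`-arrows, then `T p = q`. -/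
def ActsAsOnQ' (s t : E → V) (m : ℕ) (g : List E → List E)
    (T : nQ s t →ₗ[ℝ] nQ s t) : Prop :=
  ∀ p q : PathQ s t,
    (∃ L : List (List E), IsDecompQ' s t m L p.val ∧ (L.map g).flatten = q.val) →
    T (Finsupp.single p 1) = Finsupp.single q 1


/-! ### Auxiliary: bilinearity of `bra` -/

section BraLin

variable (s t : E → V)

/-- `bra` packaged as a bilinear map. -/
def braL : nQ s t →ₗ[ℝ] nQ s t →ₗ[ℝ] nQ s t :=
  Finsupp.lsum ℝ fun x => LinearMap.toSpanSingleton ℝ (nQ s t →ₗ[ℝ] nQ s t)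
    (Finsupp.linearCombination ℝ (braBasis s t x))

lemma braL_eq_bra (u v : nQ s t) : braL s t u v = bra s t u v := by
  rw [bra, braL, Finsupp.lsum_apply, Finsupp.sum, Finsupp.sum, LinearMap.sum_apply]
  refine Finset.sum_congr rfl fun x _ => ?_
  rw [LinearMap.toSpanSingleton_apply, LinearMap.smul_apply,
    Finsupp.linearCombination_apply, Finsupp.smul_sum, Finsupp.sum]
  exact Finset.sum_congr rfl fun y _ => (mul_smul _ _ _).symm

lemma bra_single_single (p q : PathQ s t) :
    bra s t (Finsupp.single p 1) (Finsupp.single q 1) = braBasis s t p q := by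
  rw [← braL_eq_bra, braL, Finsupp.lsum_single, LinearMap.toSpanSingleton_apply,
    LinearMap.smul_apply, Finsupp.linearCombination_single]
  simp

lemma bra_zero_left (v : nQ s t) : bra s t 0 v = 0 := by
  rw [← braL_eq_bra]; simp

lemma bra_zero_right (u : nQ s t) : bra s t u 0 = 0 := by
  rw [← braL_eq_bra]; simp

lemma bra_smul_left (c : ℝ) (u v : nQ s t) : bra s t (c • u) v = c • bra s t u v := by
  rw [← braL_eq_bra, ← braL_eq_bra]; simp

lemma bra_smul_right (c : ℝ) (u v : nQ s t) : bra s t u (c • v) = c • bra s t u v := by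
  rw [← braL_eq_bra, ← braL_eq_bra]; simp

end BraLin

/-! ### Auxiliary: path combinatorics -/

section Paths

variable {s t : E → V} {m : ℕ}

lemma isPath_single (a : E) : IsPath s t [a] :=
  ⟨by simp, List.isChain_singleton _⟩

lemma edge_isPath {p : List E} (hp : p ∈ edgesQ' s t m) : IsPath s t p := by
  rcases hp with ⟨a, _, rfl⟩ | ⟨a, b, _, hab, rfl⟩
  · exact isPath_single a
  · exact hab

lemma edge_ne_nil {p : List E} (hp : p ∈ edgesQ' s t m) : p ≠ [] :=
  (edge_isPath hp).1

/-- No path of `Q` ends at the source of an arrow of the starting set. -/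
lemma no_path_into_start (hm : IsMaxPathLen s t m) {a : E} (ha : a ∈ startSet s t m)
    {l : List E} (hl : IsPath s t l) (hend : tgt? t l = some (s a)) : False := by
  obtain ⟨x, hx, hax, hlen⟩ := ha
  obtain ⟨c, hc, htc⟩ : ∃ c, l.getLast? = some c ∧ t c = s a := by
    rcases h : l.getLast? with _ | c
    · rw [tgt?, h] at hend; simp at hend
    · rw [tgt?, h] at hend; exact ⟨c, rfl, by simpa using hend⟩
  have hlp : IsPath s t (l ++ a :: x) := by
    refine ⟨by simp [hl.1], ?_⟩
    rw [List.Chain', List.isChain_append]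
    refine ⟨hl.2, hax.2, fun y hy z hz => ?_⟩
    rw [hc, Option.mem_def] at hy
    rw [List.head?_cons, Option.mem_def] at hz
    cases hy; cases hz
    exact htc
  have := hm.2 _ hlp
  rw [List.length_append, hlen] at this
  have : l.length = 0 := by omega
  exact hl.1 (List.length_eq_zero_iff.mp this)

/-- Any arrow with the same target as an arrow of the starting set is in the starting set. -/
lemma mem_startSet_of_same_tgt (hm : IsMaxPathLen s t m) {a c : E}
    (ha : a ∈ startSet s t m) (hca : t c = t a) : c ∈ startSet s t m := by
  obtain ⟨x, hx, hax, hlen⟩ := ha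
  refine ⟨x, hx, ⟨by simp, ?_⟩, by simpa using hlen⟩
  cases x with
  | nil => exact absurd rfl hx.1
  | cons x0 xs =>
    have h2 := hax.2
    rw [List.Chain', List.isChain_cons_cons] at h2 ⊢
    exact ⟨by rw [hca]; exact h2.1, h2.2⟩

/-- No `Q'`-arrow ends at the target of an arrow of the starting set. -/
lemma no_edge_into_tgt_start (hm : IsMaxPathLen s t m) {a : E} (ha : a ∈ startSet s t m)
    {p : List E} (hp : p ∈ edgesQ' s t m) (hend : tgt? t p = some (t a)) : False := by
  rcases hp with ⟨c, hc, rfl⟩ | ⟨c, d, hc, hcd, rfl⟩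
  · refine hc (mem_startSet_of_same_tgt hm ha ?_)
    simpa [tgt?] using hend
  · have hd : d ∈ startSet s t m := by
      refine mem_startSet_of_same_tgt hm ha ?_
      simpa [tgt?] using hend
    refine no_path_into_start hm hd (isPath_single c) ?_
    have : t c = s d := by
      have h2 := hcd.2
      rw [List.Chain', List.isChain_cons_cons] at h2
      exact h2.1
    simp [tgt?, this]

lemma decomp_isPath {L : List (List E)} {l : List E} (h : IsDecompQ' s t m L l) :
    IsPath s t l := by
  obtain ⟨hne, hmem, hchain, hflat⟩ := h
  have hblocks : ∀ p ∈ L, IsPath s t p := fun p hp => edge_isPath (hmem p hp)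
  have hnil : [] ∉ L := fun h0 => (hblocks [] h0).1 rfl
  subst hflat
  constructor
  · cases L with
    | nil => exact absurd rfl hne
    | cons B T =>
      intro hfl
      rw [List.flatten_cons, List.append_eq_nil_iff] at hfl
      exact (hblocks B (by simp)).1 hfl.1
  · rw [List.Chain', List.isChain_flatten hnil]
    refine ⟨fun p hp => (hblocks p hp).2, ?_⟩
    refine hchain.imp ?_
    intro p q hpq x hx y hy
    rw [Option.mem_def] at hx hy
    rw [tgt?, src?, hx, hy] at hpq
    simpa using hpq

lemma decomp_src {L : List (List E)} {l : List E} (h : IsDecompQ' s t m L l)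
    {B : List E} (hB : L.head? = some B) : src? s l = src? s B := by
  obtain ⟨hne, hmem, hchain, hflat⟩ := h
  cases L with
  | nil => simp at hB
  | cons B0 T =>
    obtain rfl : B0 = B := by simpa using hB
    rw [← hflat, List.flatten_cons, src?, src?,
      List.head?_append_of_ne_nil _ (edge_ne_nil (hmem B0 (by simp)))]

lemma decomp_tgt {L : List (List E)} {l : List E} (h : IsDecompQ' s t m L l)
    {B : List E} (hB : L.getLast? = some B) : tgt? t l = tgt? t B := by
  obtain ⟨hne, hmem, hchain, hflat⟩ := h
  obtain ⟨L', rfl⟩ := List.getLast?_eq_some_iff.mp hB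
  have hBne : B ≠ [] := edge_ne_nil (hmem B (by simp))
  rw [← hflat, List.flatten_append, tgt?, tgt?]
  have hfB : [B].flatten = B := by simp
  rw [hfB, List.getLast?_append_of_ne_nil _ hBne]

end Paths

section Decomp

variable {s t : E → V} {m : ℕ}

lemma decomp_tail {B : List E} {T : List (List E)} {l : List E}
    (h : IsDecompQ' s t m (B :: T) l) (hT : T ≠ []) : IsDecompQ' s t m T T.flatten :=
  ⟨hT, fun p hp => h.2.1 p (by simp [hp]), h.2.2.1.tail, rfl⟩

lemma decomp_single {B : List E} (hB : B ∈ edgesQ' s t m) : IsDecompQ' s t m [B] B :=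
  ⟨by simp, by intro p hp; rw [List.mem_singleton] at hp; exact hp ▸ hB, List.isChain_singleton _, by simp⟩

/-- Decompositions of a list as a `Q'`-path are unique. -/
lemma decomp_unique (hm : IsMaxPathLen s t m) :
    ∀ (L₁ L₂ : List (List E)) (l : List E),
      IsDecompQ' s t m L₁ l → IsDecompQ' s t m L₂ l → L₁ = L₂ := by
  intro L₁
  induction L₁ with
  | nil => intro L₂ l h₁ _; exact absurd rfl h₁.1
  | cons B₁ T₁ ih =>
    intro L₂ l h₁ h₂
    cases L₂ with
    | nil => exact absurd rfl h₂.1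
    | cons B₂ T₂ =>
      have hfl : B₁ ++ T₁.flatten = B₂ ++ T₂.flatten := by
        have e1 := h₁.2.2.2; have e2 := h₂.2.2.2
        rw [List.flatten_cons] at e1 e2
        rw [e1, e2]
      have hB : B₁ = B₂ := by
        have m₁ := h₁.2.1 B₁ (by simp)
        have m₂ := h₂.2.1 B₂ (by simp)
        rcases m₁ with ⟨a₁, ha₁, rfl⟩ | ⟨a₁, b₁, ha₁, _, rfl⟩ <;>
          rcases m₂ with ⟨a₂, ha₂, rfl⟩ | ⟨a₂, b₂, ha₂, _, rfl⟩ <;>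
            simp only [List.cons_append, List.nil_append, List.cons.injEq] at hfl
        · simp [hfl.1]
        · exact absurd (hfl.1 ▸ ha₂) ha₁
        · exact absurd (hfl.1 ▸ ha₁) ha₂
        · obtain ⟨rfl, rfl, -⟩ := hfl
          rfl
      subst hB
      have hT : T₁.flatten = T₂.flatten := List.append_cancel_left hfl
      cases hT₁ : T₁ with
      | nil =>
        cases T₂ with
        | nil => rfl
        | cons C T₂' =>
          exfalso
          have hC : C ≠ [] := edge_ne_nil (h₂.2.1 C (by simp))
          subst hT₁
          simp only [List.flatten_nil, List.flatten_cons] at hT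
          exact hC (List.append_eq_nil_iff.mp hT.symm).1
      | cons C T₁' =>
        cases T₂ with
        | nil =>
          exfalso
          have hC : C ≠ [] := edge_ne_nil (h₁.2.1 C (by simp [hT₁]))
          rw [hT₁] at hT
          simp only [List.flatten_nil, List.flatten_cons] at hT
          exact hC (List.append_eq_nil_iff.mp hT).1
        | cons C₂ T₂' =>
          rw [← hT₁]
          have d₁ := decomp_tail h₁ (by simp [hT₁])
          have d₂ := decomp_tail h₂ (by simp)
          rw [hT] at d₁
          rw [ih _ _ d₁ d₂]

/-- Every path of `Q` is either a single starting arrow or a path of `Q'`. -/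
lemma dichotomy (hm : IsMaxPathLen s t m) :
    ∀ (n : ℕ) (l : List E), l.length ≤ n → IsPath s t l →
      (∃ a ∈ startSet s t m, l = [a]) ∨ IsPathQ' s t m l := by
  intro n
  induction n with
  | zero =>
    intro l hl hp
    exact absurd (List.length_eq_zero_iff.mp (Nat.le_zero.mp hl)) hp.1
  | succ n ih =>
    intro l hl hp
    match l with
    | [] => exact absurd rfl hp.1
    | [a] =>
      by_cases ha : a ∈ startSet s t m
      · exact Or.inl ⟨a, ha, rfl⟩
      · exact Or.inr ⟨[[a]], decomp_single (Or.inl ⟨a, ha, rfl⟩)⟩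
    | a :: b :: r =>
      right
      have hab : t a = s b := by
        have h2 := hp.2
        rw [List.Chain', List.isChain_cons_cons] at h2
        exact h2.1
      have hbr : IsPath s t (b :: r) := ⟨by simp, hp.2.tail⟩
      have hbS : b ∉ startSet s t m := by
        intro hb
        exact no_path_into_start hm hb (isPath_single a) (by simp [tgt?, hab])
      by_cases ha : a ∈ startSet s t m
      · -- block [a, b]
        have hab2 : IsPath s t [a, b] := by
          refine ⟨by simp, ?_⟩
          rw [List.Chain', List.isChain_cons_cons]
          exact ⟨hab, by simp⟩
        have hmem_ab : [a, b] ∈ edgesQ' s t m := Or.inr ⟨a, b, ha, hab2, rfl⟩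
        cases hr : r with
        | nil =>
          subst hr
          exact ⟨[[a, b]], decomp_single hmem_ab⟩
        | cons c r' =>
          have hrp : IsPath s t r := ⟨by simp [hr], hbr.2.tail⟩
          have hrlen : r.length ≤ n := by
            have := hl; simp at this; omega
          rcases ih r hrlen hrp with ⟨c', hc', hrc⟩ | ⟨L, hL⟩
          · exfalso
            have hbc : t b = s c' := by
              have h2 := hbr.2
              rw [hrc, List.Chain', List.isChain_cons_cons] at h2
              exact h2.1
            exact no_path_into_start hm hc' hab2 (by simp [tgt?, hbc])
          · obtain ⟨hLne, hLmem, hLchain, hLflat⟩ := hL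
            refine ⟨[a, b] :: L, by simp, ?_, ?_, by simp [hLflat, hr]⟩
            · rintro p hp'
              rcases List.mem_cons.mp hp' with rfl | hp''
              · exact hmem_ab
              · exact hLmem p hp''
            · rw [List.Chain', List.isChain_cons]
              refine ⟨?_, hLchain⟩
              intro B hB
              rw [← decomp_src ⟨hLne, hLmem, hLchain, hLflat⟩ hB]
              have hbc : t b = s c := by
                have h2 := hbr.2
                rw [hr, List.Chain', List.isChain_cons_cons] at h2
                exact h2.1
              simp [tgt?, src?, hr, hbc]
      · -- block [a]
        have hbrlen : (b :: r).length ≤ n := by simp at hl ⊢; omega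
        rcases ih (b :: r) hbrlen hbr with ⟨c', hc', hbc⟩ | ⟨L, hL⟩
        · exfalso
          injection hbc with h1 _
          exact hbS (h1 ▸ hc')
        · obtain ⟨hLne, hLmem, hLchain, hLflat⟩ := hL
          refine ⟨[a] :: L, by simp, ?_, ?_, by rw [List.flatten_cons, hLflat]; rfl⟩
          · rintro p hp'
            rcases List.mem_cons.mp hp' with rfl | hp''
            · exact Or.inl ⟨a, ha, rfl⟩
            · exact hLmem p hp''
          · rw [List.Chain', List.isChain_cons]
            refine ⟨?_, hLchain⟩
            intro B hB
            rw [← decomp_src ⟨hLne, hLmem, hLchain, hLflat⟩ hB]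
            simp [tgt?, src?, hab]

end Decomp

section Eig

variable {s t : E → V} {m : ℕ}

lemma braBasis_of_path (x y : PathQ s t) (h : IsPath s t (x.val ++ y.val)) :
    braBasis s t x y = Finsupp.single ⟨x.val ++ y.val, h⟩ 1 :=
  dif_pos h

lemma braBasis_of_path' (x y : PathQ s t) (h1 : ¬ IsPath s t (x.val ++ y.val))
    (h2 : IsPath s t (y.val ++ x.val)) :
    braBasis s t x y = -Finsupp.single ⟨y.val ++ x.val, h2⟩ 1 := by
  rw [braBasis, dif_neg h1, dif_pos h2]

lemma braBasis_of_not (x y : PathQ s t) (h1 : ¬ IsPath s t (x.val ++ y.val))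
    (h2 : ¬ IsPath s t (y.val ++ x.val)) : braBasis s t x y = 0 := by
  rw [braBasis, dif_neg h1, dif_neg h2]

lemma single_mem_span {p : PathQ s t} (h : IsPathQ' s t m p.val) :
    Finsupp.single p (1 : ℝ) ∈ nQ'span s t m :=
  Submodule.subset_span ⟨p, h, rfl⟩

/-- The eigenvalue of a basis path, extracted as the diagonal matrix entry. -/
def cval (s t : E → V) (D : nQ s t →ₗ[ℝ] nQ s t) (l : List E) : ℝ :=
  if h : IsPath s t l then D (Finsupp.single ⟨l, h⟩ 1) ⟨l, h⟩ else 0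

variable {D : nQ s t →ₗ[ℝ] nQ s t}

lemma eig (hdiag : ∀ p : PathQ s t, IsPathQ' s t m p.val →
      ∃ c : ℝ, D (Finsupp.single p 1) = c • Finsupp.single p 1)
    {l : List E} (hl : IsPath s t l) (hl' : IsPathQ' s t m l) :
    D (Finsupp.single ⟨l, hl⟩ 1) = cval s t D l • Finsupp.single ⟨l, hl⟩ 1 := by
  obtain ⟨c, hc⟩ := hdiag ⟨l, hl⟩ hl'
  have hcv : cval s t D l = c := by
    simp only [cval]
    rw [dif_pos hl, hc]
    simp
  rw [hcv, hc]

lemma tgt_of_append_path {l : List E} {a : E} (h : IsPath s t (l ++ [a])) (hl : l ≠ []) :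
    tgt? t l = some (s a) := by
  have h2 := h.2
  rw [List.Chain', List.isChain_append] at h2
  obtain ⟨-, -, hlink⟩ := h2
  cases hgl : l.getLast? with
  | none => exact absurd (List.getLast?_eq_none_iff.mp hgl) hl
  | some c =>
    have := hlink c (by rw [hgl]; rfl) a (by rfl)
    rw [tgt?, hgl, Option.map_some, this]

lemma cval_append
    (hDder : ∀ u ∈ nQ'span s t m, ∀ v ∈ nQ'span s t m,
      D (bra s t u v) = bra s t (D u) v + bra s t u (D v))
    (hdiag : ∀ p : PathQ s t, IsPathQ' s t m p.val →
      ∃ c : ℝ, D (Finsupp.single p 1) = c • Finsupp.single p 1)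
    {p q : List E} (hp : IsPath s t p) (hq : IsPath s t q)
    (hp' : IsPathQ' s t m p) (hq' : IsPathQ' s t m q) (hpq : IsPath s t (p ++ q)) :
    cval s t D (p ++ q) = cval s t D p + cval s t D q := by
  have h := hDder (Finsupp.single ⟨p, hp⟩ 1) (single_mem_span hp')
    (Finsupp.single ⟨q, hq⟩ 1) (single_mem_span hq')
  rw [bra_single_single, eig hdiag hp hp', eig hdiag hq hq', bra_smul_left, bra_smul_right,
    bra_single_single, braBasis_of_path _ _ hpq] at h
  have hcv : cval s t D (p ++ q) = D (Finsupp.single (⟨p ++ q, hpq⟩ : PathQ s t) 1) ⟨p ++ q, hpq⟩ := by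
    simp only [cval]
    rw [dif_pos hpq]
  rw [hcv, h]
  simp

/-- Prepending a starting arrow to a decomposed `Q'`-path. -/
lemma decomp_cons (hm : IsMaxPathLen s t m) {a : E} (ha : a ∈ startSet s t m)
    {l : List E} (hal : IsPath s t (a :: l)) {L : List (List E)}
    (hL : IsDecompQ' s t m L l) :
    ∃ b L', b ∉ startSet s t m ∧ L = [b] :: L' ∧ l = b :: L'.flatten ∧
      IsDecompQ' s t m ([a, b] :: L') (a :: l) := by
  obtain ⟨hne, hmem, hchain, hflat⟩ := hL
  cases L with
  | nil => exact absurd rfl hne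
  | cons B L' =>
    have hB := hmem B (by simp)
    have hl_eq : l = B ++ L'.flatten := by rw [← hflat, List.flatten_cons]
    rcases hB with ⟨c, hcS, rfl⟩ | ⟨c, d, hcS, hcd, rfl⟩
    · have hlc : l = c :: L'.flatten := by simpa using hl_eq
      have hac : t a = s c := by
        have h2 := hal.2
        rw [hlc, List.Chain', List.isChain_cons_cons] at h2
        exact h2.1
      have hacp : IsPath s t [a, c] := by
        refine ⟨by simp, ?_⟩
        rw [List.Chain', List.isChain_cons_cons]
        exact ⟨hac, by simp⟩
      refine ⟨c, L', hcS, rfl, hlc, by simp, ?_, ?_, ?_⟩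
      · intro p hp
        rcases List.mem_cons.mp hp with rfl | hp'
        · exact Or.inr ⟨a, c, ha, hacp, rfl⟩
        · exact hmem p (by simp [hp'])
      · rw [List.Chain', List.isChain_cons]
        rw [List.Chain', List.isChain_cons] at hchain
        refine ⟨?_, hchain.2⟩
        intro B' hB'
        rw [← hchain.1 B' hB']
        simp [tgt?]
      · rw [List.flatten_cons, hlc]
        rfl
    · exfalso
      have hac : t a = s c := by
        have h2 := hal.2
        rw [hl_eq, List.cons_append, List.cons_append, List.Chain', List.isChain_cons_cons] at h2
        exact h2.1
      exact no_path_into_start hm hcS (isPath_single a) (by simp [tgt?, hac])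

end Eig

section Swap

variable {s t : E → V} {m : ℕ}

lemma path_pair_comp {a b : E} (hab : IsPath s t [a, b]) : t a = s b := by
  have h2 := hab.2
  rw [List.Chain', List.isChain_cons_cons] at h2
  exact h2.1

/-- The automorphism of `Q'` swapping the arrows `[b]` and `[a, b]`. -/
def swapg (a b : E) : List E → List E := fun l =>
  if l = [b] then [a, b] else if l = [a, b] then [b] else l

lemma swapg_b {a b : E} : swapg a b [b] = [a, b] := if_pos rfl

lemma swapg_ab {a b : E} : swapg a b [a, b] = [b] := by
  simp [swapg]

lemma swapg_other {a b : E} {l : List E} (h1 : l ≠ [b]) (h2 : l ≠ [a, b]) :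
    swapg a b l = l := by
  simp [swapg, h1, h2]

lemma tgt_swapg {a b : E} (l : List E) : tgt? t (swapg a b l) = tgt? t l := by
  by_cases h1 : l = [b]
  · subst h1; rw [swapg_b]; simp [tgt?]
  by_cases h2 : l = [a, b]
  · subst h2; rw [swapg_ab]; simp [tgt?]
  · rw [swapg_other h1 h2]

lemma swapg_invol {a b : E} (l : List E) : swapg a b (swapg a b (l)) = l := by
  by_cases h1 : l = [b]
  · subst h1; rw [swapg_b, swapg_ab]
  by_cases h2 : l = [a, b]
  · subst h2; rw [swapg_ab, swapg_b]
  · rw [swapg_other h1 h2, swapg_other h1 h2]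

lemma swap_isAut (hm : IsMaxPathLen s t m) {a b : E} (ha : a ∈ startSet s t m)
    (hab : IsPath s t [a, b]) : IsQuivAutOn s t (edgesQ' s t m) (swapg a b) := by
  have htab : t a = s b := path_pair_comp hab
  have hbS : b ∉ startSet s t m := fun hb =>
    no_path_into_start hm hb (isPath_single a) (by simp [tgt?, htab])
  have hmaps : Set.MapsTo (swapg a b) (edgesQ' s t m) (edgesQ' s t m) := by
    intro p hp
    by_cases h1 : p = [b]
    · subst h1; rw [swapg_b]; exact Or.inr ⟨a, b, ha, hab, rfl⟩
    by_cases h2 : p = [a, b]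
    · subst h2; rw [swapg_ab]; exact Or.inl ⟨b, hbS, rfl⟩
    · rw [swapg_other h1 h2]; exact hp
  constructor
  · exact Set.InvOn.bijOn ⟨fun p _ => swapg_invol p, fun p _ => swapg_invol p⟩ hmaps hmaps
  · intro p hp q hq
    rw [tgt_swapg]
    have hfalse1 : ¬ tgt? t p = some (s a) :=
      fun h => no_path_into_start hm ha (edge_isPath hp) h
    have hfalse2 : ¬ tgt? t p = some (s b) :=
      fun h => no_edge_into_tgt_start hm ha hp (htab ▸ h)
    by_cases hq1 : q = [b]
    · subst hq1
      rw [swapg_b]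
      constructor
      · intro h; exact absurd (by simpa [src?] using h) hfalse2
      · intro h; exact absurd (by simpa [src?] using h) hfalse1
    by_cases hq2 : q = [a, b]
    · subst hq2
      rw [swapg_ab]
      constructor
      · intro h; exact absurd (by simpa [src?] using h) hfalse1
      · intro h; exact absurd (by simpa [src?] using h) hfalse2
    · rw [swapg_other hq1 hq2]

variable {D : nQ s t →ₗ[ℝ] nQ s t}

lemma cval_pair (hm : IsMaxPathLen s t m)
    (hdiag : ∀ p : PathQ s t, IsPathQ' s t m p.val →
      ∃ c : ℝ, D (Finsupp.single p 1) = c • Finsupp.single p 1)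
    (hcomm : ∀ g : List E → List E, IsQuivAutOn s t (edgesQ' s t m) g →
      ∀ T : nQ s t →ₗ[ℝ] nQ s t, ActsAsOnQ' s t m g T →
        ∀ u ∈ nQ'span s t m, D (T u) = T (D u))
    {a b : E} (ha : a ∈ startSet s t m) (hab : IsPath s t [a, b]) :
    cval s t D [a, b] = cval s t D [b] := by
  have htab : t a = s b := path_pair_comp hab
  have hbS : b ∉ startSet s t m := fun hb =>
    no_path_into_start hm hb (isPath_single a) (by simp [tgt?, htab])
  set g := swapg a b with hg
  have hgaut := swap_isAut hm ha hab
  set F : PathQ s t → PathQ s t := fun p =>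
    if h : ∃ q : PathQ s t, ∃ L, IsDecompQ' s t m L p.val ∧ (L.map g).flatten = q.val
    then h.choose else p with hF
  set T := Finsupp.lmapDomain ℝ ℝ F with hT
  have hacts : ActsAsOnQ' s t m g T := by
    rintro p q ⟨L, hL, hq⟩
    rw [hT, Finsupp.lmapDomain_apply, Finsupp.mapDomain_single]
    have hex : ∃ q' : PathQ s t, ∃ L', IsDecompQ' s t m L' p.val ∧
        (L'.map g).flatten = q'.val := ⟨q, L, hL, hq⟩
    have hFp : F p = q := by
      rw [hF]
      simp only
      rw [dif_pos hex]
      obtain ⟨L₂, hL₂, hq₂⟩ := hex.choose_spec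
      have hLL : L₂ = L := decomp_unique hm _ _ _ hL₂ hL
      exact Subtype.ext (by rw [← hq₂, hLL, hq])
    rw [hFp]
  have hbpath : IsPath s t [b] := isPath_single b
  have hbQ' : IsPathQ' s t m [b] := ⟨[[b]], decomp_single (Or.inl ⟨b, hbS, rfl⟩)⟩
  have habQ' : IsPathQ' s t m [a, b] :=
    ⟨[[a, b]], decomp_single (Or.inr ⟨a, b, ha, hab, rfl⟩)⟩
  have hcom := hcomm g hgaut T hacts (Finsupp.single ⟨[b], hbpath⟩ 1) (single_mem_span hbQ')
  have hTb : T (Finsupp.single ⟨[b], hbpath⟩ 1) = Finsupp.single ⟨[a, b], hab⟩ 1 := by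
    refine hacts _ _ ⟨[[b]], decomp_single (Or.inl ⟨b, hbS, rfl⟩), ?_⟩
    simp [hg, swapg]
  rw [hTb, eig hdiag hbpath hbQ', map_smul, hTb] at hcom
  have h2 := eig hdiag hab habQ'
  have h3 : cval s t D [b] • Finsupp.single (⟨[a, b], hab⟩ : PathQ s t) (1 : ℝ)
      = cval s t D [a, b] • Finsupp.single ⟨[a, b], hab⟩ 1 := hcom.symm.trans h2
  have h4 := congrArg (fun u : nQ s t => u ⟨[a, b], hab⟩) h3
  simpa using h4.symm

lemma cval_cons (hm : IsMaxPathLen s t m)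
    (hDder : ∀ u ∈ nQ'span s t m, ∀ v ∈ nQ'span s t m,
      D (bra s t u v) = bra s t (D u) v + bra s t u (D v))
    (hdiag : ∀ p : PathQ s t, IsPathQ' s t m p.val →
      ∃ c : ℝ, D (Finsupp.single p 1) = c • Finsupp.single p 1)
    (hcomm : ∀ g : List E → List E, IsQuivAutOn s t (edgesQ' s t m) g →
      ∀ T : nQ s t →ₗ[ℝ] nQ s t, ActsAsOnQ' s t m g T →
        ∀ u ∈ nQ'span s t m, D (T u) = T (D u))
    {a : E} {l : List E} (ha : a ∈ startSet s t m) (hl : IsPath s t l)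
    (hal : IsPath s t (a :: l)) (hl' : IsPathQ' s t m l) :
    IsPathQ' s t m (a :: l) ∧ cval s t D (a :: l) = cval s t D l := by
  obtain ⟨L, hL⟩ := hl'
  obtain ⟨b, L', hbS, rfl, hlb, hdec⟩ := decomp_cons hm ha hal hL
  have habp : IsPath s t [a, b] := edge_isPath (hdec.2.1 [a, b] (by simp))
  refine ⟨⟨_, hdec⟩, ?_⟩
  cases L' with
  | nil =>
    have hlb' : l = [b] := by simpa using hlb
    subst hlb'
    exact cval_pair hm hdiag hcomm ha habp
  | cons C T =>
    have hd' : IsDecompQ' s t m (C :: T) (C :: T).flatten := decomp_tail hdec (by simp)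
    have hrp : IsPath s t (C :: T).flatten := decomp_isPath hd'
    have hrQ' : IsPathQ' s t m (C :: T).flatten := ⟨_, hd'⟩
    have hbQp : IsPathQ' s t m [b] := ⟨[[b]], decomp_single (Or.inl ⟨b, hbS, rfl⟩)⟩
    have habQp : IsPathQ' s t m [a, b] := ⟨[[a, b]], decomp_single (hdec.2.1 [a, b] (by simp))⟩
    have hbp : IsPath s t [b] := isPath_single b
    have hbflat : IsPath s t ([b] ++ (C :: T).flatten) := by rw [hlb] at hl; exact hl
    have habflat : IsPath s t ([a, b] ++ (C :: T).flatten) := by rw [hlb] at hal; exact hal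
    have e1 : cval s t D ([a, b] ++ (C :: T).flatten)
        = cval s t D [a, b] + cval s t D (C :: T).flatten :=
      cval_append hDder hdiag habp hrp habQp hrQ' habflat
    have e2 : cval s t D ([b] ++ (C :: T).flatten)
        = cval s t D [b] + cval s t D (C :: T).flatten :=
      cval_append hDder hdiag hbp hrp hbQp hrQ' hbflat
    have e3 := cval_pair hm hdiag hcomm ha habp
    rw [hlb]
    show cval s t D ([a, b] ++ (C :: T).flatten) = cval s t D ([b] ++ (C :: T).flatten)
    rw [e1, e2, e3]

end Swap

/-- Let `Q` be a finite quiver without cycles of length `m` and let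
`D̄` be the linear endomorphism of `n_Q` vanishing on `span S` and restricting on
`n' = span Path(Q')` to a derivation of `n'` which is diagonal with respect to the
basis `Path(Q')` and commutes with every automorphism of `Q'`. Then `D̄` is a
derivation of `n_Q`. -/
theorem extension_by_zero_is_derivation [Finite V] [Finite E] (s t : E → V)
    (hQ : NoCycles s t) (m : ℕ) (hm : IsMaxPathLen s t m)
    (D : nQ s t →ₗ[ℝ] nQ s t)
    (hD0 : ∀ a ∈ startSet s t m, D (Finsupp.single (edgePath s t a) 1) = 0)
    (hDmem : ∀ u ∈ nQ'span s t m, D u ∈ nQ'span s t m)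
    (hDder : ∀ u ∈ nQ'span s t m, ∀ v ∈ nQ'span s t m,
      D (bra s t u v) = bra s t (D u) v + bra s t u (D v))
    (hdiag : ∀ p : PathQ s t, IsPathQ' s t m p.val →
      ∃ c : ℝ, D (Finsupp.single p 1) = c • Finsupp.single p 1)
    (hcomm : ∀ g : List E → List E, IsQuivAutOn s t (edgesQ' s t m) g →
      ∀ T : nQ s t →ₗ[ℝ] nQ s t, ActsAsOnQ' s t m g T →
        ∀ u ∈ nQ'span s t m, D (T u) = T (D u)) :
    ∀ u v : nQ s t, D (bra s t u v) = bra s t (D u) v + bra s t u (D v) := by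
  have hkey : ∀ p q : PathQ s t,
      D (bra s t (Finsupp.single p 1) (Finsupp.single q 1)) =
        bra s t (D (Finsupp.single p 1)) (Finsupp.single q 1) +
          bra s t (Finsupp.single p 1) (D (Finsupp.single q 1)) := by
    intro p q
    rcases dichotomy hm p.val.length p.val le_rfl p.2 with ⟨a, haS, hpa⟩ | hp'
    · -- p is a starting arrow
      have hpe : p = edgePath s t a := Subtype.ext hpa
      rcases dichotomy hm q.val.length q.val le_rfl q.2 with ⟨b, hbS, hqb⟩ | hq'
      · -- q is a starting arrow too
        have hqe : q = edgePath s t b := Subtype.ext hqb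
        have hnot1 : ¬ IsPath s t ((edgePath s t a).val ++ (edgePath s t b).val) := by
          intro h
          have hab : t a = s b := path_pair_comp h
          exact no_path_into_start hm hbS (isPath_single a) (by simp [tgt?, hab])
        have hnot2 : ¬ IsPath s t ((edgePath s t b).val ++ (edgePath s t a).val) := by
          intro h
          have hba : t b = s a := path_pair_comp h
          exact no_path_into_start hm haS (isPath_single b) (by simp [tgt?, hba])
        rw [hpe, hqe, hD0 a haS, hD0 b hbS, bra_zero_left, bra_zero_right,
          bra_single_single, braBasis_of_not _ _ hnot1 hnot2]
        simp
      · -- p starting arrow, q a path of Q'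
        rw [hpe, hD0 a haS, bra_zero_left, zero_add, bra_single_single,
          eig hdiag q.2 hq', bra_smul_right, bra_single_single]
        have hnot2 : ¬ IsPath s t (q.val ++ (edgePath s t a).val) := by
          intro h
          exact no_path_into_start hm haS q.2 (tgt_of_append_path h q.2.1)
        by_cases h1 : IsPath s t ((edgePath s t a).val ++ q.val)
        · have h1' : IsPath s t (a :: q.val) := h1
          obtain ⟨hQ'aq, hcv⟩ := cval_cons hm hDder hdiag hcomm haS q.2 h1' hq'
          rw [braBasis_of_path _ _ h1, eig hdiag h1 (show IsPathQ' s t m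
            ((edgePath s t a).val ++ q.val) from hQ'aq)]
          have : cval s t D ((edgePath s t a).val ++ q.val) = cval s t D q.val := hcv
          rw [this]
        · rw [braBasis_of_not _ _ h1 hnot2]
          simp
    · rcases dichotomy hm q.val.length q.val le_rfl q.2 with ⟨b, hbS, hqb⟩ | hq'
      · -- p path of Q', q starting arrow
        have hqe : q = edgePath s t b := Subtype.ext hqb
        rw [hqe, hD0 b hbS, bra_zero_right, add_zero, bra_single_single,
          eig hdiag p.2 hp', bra_smul_left, bra_single_single]
        have hnot1 : ¬ IsPath s t (p.val ++ (edgePath s t b).val) := by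
          intro h
          exact no_path_into_start hm hbS p.2 (tgt_of_append_path h p.2.1)
        by_cases h2 : IsPath s t ((edgePath s t b).val ++ p.val)
        · have h2' : IsPath s t (b :: p.val) := h2
          obtain ⟨hQ'bp, hcv⟩ := cval_cons hm hDder hdiag hcomm hbS p.2 h2' hp'
          rw [braBasis_of_path' _ _ hnot1 h2, map_neg,
            eig hdiag h2 (show IsPathQ' s t m ((edgePath s t b).val ++ p.val) from hQ'bp)]
          have : cval s t D ((edgePath s t b).val ++ p.val) = cval s t D p.val := hcv
          rw [this, smul_neg]
        · rw [braBasis_of_not _ _ hnot1 h2]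
          simp
      · -- both paths of Q'
        exact hDder _ (single_mem_span hp') _ (single_mem_span hq')
  -- bilinear extension
  have hext : (braL s t).compr₂ D = ((braL s t).comp D) + (braL s t).compl₂ D := by
    refine Finsupp.lhom_ext fun p cp => ?_
    refine Finsupp.lhom_ext fun q cq => ?_
    rw [← Finsupp.smul_single_one p cp, ← Finsupp.smul_single_one q cq]
    simp only [LinearMap.compr₂_apply, LinearMap.add_apply, LinearMap.comp_apply,
      LinearMap.compl₂_apply, map_smul, LinearMap.smul_apply, braL_eq_bra,
      bra_smul_left, bra_smul_right]
    rw [hkey p q]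
  intro u v
  have h1 := LinearMap.congr_fun (LinearMap.congr_fun hext u) v
  simpa only [LinearMap.compr₂_apply, LinearMap.add_apply, LinearMap.comp_apply,
    LinearMap.compl₂_apply, braL_eq_bra] using h1

end
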